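/- A locally compact Hausdorff étale groupoid G is effective (i.e., the interior of its isotropy bundle equals the unit space) if and only if G contains no nontrivial open abelian subgroupoid, where a subgroupoid S is abelian if it is contained in the isotropy and any two composable elements of S commute, and S is trivial if S ⊆ G^(0). -/

import Mathlib

/-- A groupoid structure on a type `G`: range, source, a (partial, made total)
multiplication meaningful on composable pairs, and inversion. -/
structure GroupoidStruct (G : Type*) where
  r : G → G
  s : G → G
  mul : G → G → G
  inv : G → G
  r_mul : ∀ g h, s g = r h → r (mul g h) = r g
  s_mul : ∀ g h, s g = r h → s (mul g h) = s h
  r_inv : ∀ g, r (inv g) = s g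
  s_inv : ∀ g, s (inv g) = r g
  r_unit : ∀ g, mul (r g) g = g
  s_unit : ∀ g, mul g (s g) = g
  inv_mul : ∀ g, mul (inv g) g = s g
  mul_inv : ∀ g, mul g (inv g) = r g
  assoc : ∀ g h k, s g = r h → s h = r k → mul (mul g h) k = mul g (mul h k)

/-- A subset `H ⊆ G` is a subgroupoid if it is closed under inversion and under
multiplication of composable pairs. -/
def GroupoidStruct.IsSubgroupoid {G : Type*} (gs : GroupoidStruct G) (H : Set G) : Prop :=
  (∀ g ∈ H, gs.inv g ∈ H) ∧
  (∀ g ∈ H, ∀ h ∈ H, gs.s g = gs.r h → gs.mul g h ∈ H)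

/-- The unit space of a groupoid, viewed inside `G`. -/
def GroupoidStruct.unitSpace {G : Type*} (gs : GroupoidStruct G) : Set G :=
  {g | gs.r g = g}

/-- The isotropy bundle `Iso(G) = {g : r g = s g}`. -/
def GroupoidStruct.iso {G : Type*} (gs : GroupoidStruct G) : Set G :=
  {g | gs.r g = gs.s g}

/-- An abelian subgroupoid: a subgroupoid contained in the isotropy bundle in which
any two composable elements commute. -/
def GroupoidStruct.IsAbelianSubgroupoid {G : Type*} (gs : GroupoidStruct G)
    (S : Set G) : Prop :=
  gs.IsSubgroupoid S ∧ S ⊆ gs.iso ∧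
  ∀ g ∈ S, ∀ h ∈ S, gs.s g = gs.r h → gs.mul g h = gs.mul h g


section Aux

set_option linter.unusedSectionVars false

namespace GroupoidStruct
variable {G : Type*} (gs : GroupoidStruct G)

lemma r_r (g : G) : gs.r (gs.r g) = gs.r g := by
  have h := gs.r_mul g (gs.inv g) (gs.r_inv g).symm
  rwa [gs.mul_inv] at h

lemma s_r (g : G) : gs.s (gs.r g) = gs.r g := by
  have h := gs.s_mul g (gs.inv g) (gs.r_inv g).symm
  rwa [gs.mul_inv, gs.s_inv] at h

lemma left_cancel {c x y : G} (hx : gs.s c = gs.r x) (hy : gs.s c = gs.r y)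
    (h : gs.mul c x = gs.mul c y) : x = y := by
  have e1 : gs.mul (gs.inv c) (gs.mul c x) = x := by
    rw [← gs.assoc (gs.inv c) c x (gs.s_inv c) hx, gs.inv_mul, hx, gs.r_unit]
  have e2 : gs.mul (gs.inv c) (gs.mul c y) = y := by
    rw [← gs.assoc (gs.inv c) c y (gs.s_inv c) hy, gs.inv_mul, hy, gs.r_unit]
  rw [← e1, h, e2]

lemma inv_inv (g : G) : gs.inv (gs.inv g) = g := by
  apply gs.left_cancel (c := gs.inv g) (gs.r_inv _).symm (gs.s_inv g)
  rw [gs.mul_inv, gs.inv_mul, gs.r_inv]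

lemma inv_unit {u : G} (hu : gs.r u = u) : gs.inv u = u := by
  have hsu : gs.s u = u := by have := gs.s_r u; rwa [hu] at this
  have h2 : gs.mul u u = u := by have := gs.s_unit u; rwa [hsu] at this
  apply gs.left_cancel (c := u) (gs.r_inv u).symm (hsu.trans hu.symm)
  rw [gs.mul_inv, hu, h2]

lemma inv_mul_rev {g h : G} (hc : gs.s g = gs.r h) :
    gs.inv (gs.mul g h) = gs.mul (gs.inv h) (gs.inv g) := by
  have hc2 : gs.s (gs.inv h) = gs.r (gs.inv g) := by
    rw [gs.s_inv, gs.r_inv, hc]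
  have hy : gs.s (gs.mul g h) = gs.r (gs.mul (gs.inv h) (gs.inv g)) := by
    rw [gs.s_mul g h hc, gs.r_mul _ _ hc2, gs.r_inv]
  apply gs.left_cancel (c := gs.mul g h) (gs.r_inv _).symm hy
  rw [gs.mul_inv]
  have inner : gs.mul h (gs.mul (gs.inv h) (gs.inv g)) = gs.inv g := by
    rw [← gs.assoc h (gs.inv h) (gs.inv g) (gs.r_inv h).symm hc2, gs.mul_inv,
      show gs.r h = gs.r (gs.inv g) by rw [gs.r_inv, hc], gs.r_unit]
  rw [gs.assoc g h _ hc (by rw [gs.s_mul g h hc] at hy; exact hy), inner, gs.mul_inv,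
    gs.r_mul g h hc]

def gpow (a : G) : ℕ → G
  | 0 => gs.r a
  | n + 1 => gs.mul a (gpow a n)

variable {a : G} (ha : gs.s a = gs.r a)

include ha

lemma gpow_r (n : ℕ) : gs.r (gs.gpow a n) = gs.r a := by
  induction n with
  | zero => exact gs.r_r a
  | succ n ih => exact gs.r_mul a _ (ha.trans ih.symm)

lemma gpow_s (n : ℕ) : gs.s (gs.gpow a n) = gs.r a := by
  induction n with
  | zero => exact gs.s_r a
  | succ n ih => exact (gs.s_mul a _ (ha.trans (gs.gpow_r ha n).symm)).trans ih

lemma gpow_add (m k : ℕ) : gs.mul (gs.gpow a m) (gs.gpow a k) = gs.gpow a (m + k) := by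
  induction m with
  | zero =>
    show gs.mul (gs.r a) _ = _
    rw [← gs.gpow_r ha k, gs.r_unit, Nat.zero_add]
  | succ m ih =>
    show gs.mul (gs.mul a (gs.gpow a m)) _ = _
    rw [gs.assoc a _ _ (ha.trans (gs.gpow_r ha m).symm)
      ((gs.gpow_s ha m).trans (gs.gpow_r ha k).symm), ih,
      show m + 1 + k = (m + k) + 1 by omega]
    rfl

lemma gpow_mul_inv (M K : ℕ) :
    gs.mul (gs.gpow a (M + K)) (gs.inv (gs.gpow a K)) = gs.gpow a M := by
  rw [← gs.gpow_add ha M K,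
    gs.assoc _ _ _ ((gs.gpow_s ha M).trans (gs.gpow_r ha K).symm) (gs.r_inv _).symm,
    gs.mul_inv, gs.gpow_r ha K, ← gs.gpow_s ha M, gs.s_unit]

lemma inv_mul_gpow (M K : ℕ) :
    gs.mul (gs.inv (gs.gpow a K)) (gs.gpow a (K + M)) = gs.gpow a M := by
  rw [← gs.gpow_add ha K M,
    ← gs.assoc _ _ _ (gs.s_inv _) ((gs.gpow_s ha K).trans (gs.gpow_r ha M).symm),
    gs.inv_mul, gs.gpow_s ha K, ← gs.gpow_r ha M, gs.r_unit]

lemma gpow_mul_invK (M K : ℕ) : gs.mul (gs.gpow a M) (gs.inv (gs.gpow a K)) =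
    if K ≤ M then gs.gpow a (M - K) else gs.inv (gs.gpow a (K - M)) := by
  split_ifs with h
  · conv_lhs => rw [show M = (M - K) + K by omega]
    exact gs.gpow_mul_inv ha _ _
  · conv_lhs => rw [show K = (K - M) + M by omega, ← gs.gpow_add ha (K - M) M,
      gs.inv_mul_rev ((gs.gpow_s ha _).trans (gs.gpow_r ha _).symm)]
    rw [← gs.assoc _ _ _ (gs.r_inv _).symm
        ((gs.s_inv _).trans ((gs.gpow_r ha M).trans ((gs.r_inv _).trans (gs.gpow_s ha _)).symm)),
      gs.mul_inv, gs.gpow_r ha M,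
      show gs.r a = gs.r (gs.inv (gs.gpow a (K - M))) by rw [gs.r_inv, gs.gpow_s ha],
      gs.r_unit]

lemma invK_mul_gpow (M K : ℕ) : gs.mul (gs.inv (gs.gpow a M)) (gs.gpow a K) =
    if M ≤ K then gs.gpow a (K - M) else gs.inv (gs.gpow a (M - K)) := by
  split_ifs with h
  · conv_lhs => rw [show K = M + (K - M) by omega]
    exact gs.inv_mul_gpow ha _ _
  · conv_lhs => rw [show M = K + (M - K) by omega, ← gs.gpow_add ha K (M - K),
      gs.inv_mul_rev ((gs.gpow_s ha _).trans (gs.gpow_r ha _).symm)]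
    rw [gs.assoc _ _ _
        ((gs.s_inv _).trans ((gs.gpow_r ha _).trans ((gs.r_inv _).trans (gs.gpow_s ha K)).symm))
        (gs.s_inv _),
      gs.inv_mul, gs.gpow_s ha K,
      show gs.r a = gs.s (gs.inv (gs.gpow a (M - K))) by rw [gs.s_inv, gs.gpow_r ha],
      gs.s_unit]

omit ha

def gzpow (a : G) (m : ℤ) : G :=
  if 0 ≤ m then gs.gpow a m.toNat else gs.inv (gs.gpow a (-m).toNat)

include ha

lemma gzpow_r (m : ℤ) : gs.r (gs.gzpow a m) = gs.r a := by
  unfold gzpow; split_ifs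
  · exact gs.gpow_r ha _
  · exact (gs.r_inv _).trans (gs.gpow_s ha _)

lemma gzpow_s (m : ℤ) : gs.s (gs.gzpow a m) = gs.r a := by
  unfold gzpow; split_ifs
  · exact gs.gpow_s ha _
  · exact (gs.s_inv _).trans (gs.gpow_r ha _)

lemma gzpow_iso (m : ℤ) : gs.s (gs.gzpow a m) = gs.r (gs.gzpow a m) :=
  (gs.gzpow_s ha m).trans (gs.gzpow_r ha m).symm

lemma gzpow_inv (m : ℤ) : gs.inv (gs.gzpow a m) = gs.gzpow a (-m) := by
  rcases lt_trichotomy m 0 with h | h | h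
  · rw [gzpow, gzpow, if_neg (by omega), if_pos (by omega), gs.inv_inv]
  · subst h
    simp only [gzpow, neg_zero, if_pos le_rfl]
    exact gs.inv_unit (gs.r_r a)
  · rw [gzpow, gzpow, if_pos (by omega), if_neg (by omega), Int.neg_neg]

lemma gzpow_mul (m k : ℤ) :
    gs.mul (gs.gzpow a m) (gs.gzpow a k) = gs.gzpow a (m + k) := by
  unfold gzpow
  by_cases hm : 0 ≤ m <;> by_cases hk : 0 ≤ k
  · rw [if_pos hm, if_pos hk, if_pos (by omega), gs.gpow_add ha]
    congr 1; omega
  · rw [if_pos hm, if_neg hk, gs.gpow_mul_invK ha]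
    by_cases hmk : 0 ≤ m + k
    · rw [if_pos hmk, if_pos (by omega)]; congr 1; omega
    · rw [if_neg hmk, if_neg (by omega)]; congr 2; omega
  · rw [if_neg hm, if_pos hk, gs.invK_mul_gpow ha]
    by_cases hmk : 0 ≤ m + k
    · rw [if_pos hmk, if_pos (by omega)]; congr 1; omega
    · rw [if_neg hmk, if_neg (by omega)]; congr 2; omega
  · rw [if_neg hm, if_neg hk, if_neg (by omega),
      ← gs.inv_mul_rev ((gs.gpow_s ha _).trans (gs.gpow_r ha _).symm), gs.gpow_add ha]
    congr 2; omega

lemma gzpow_one : gs.gzpow a 1 = a := by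
  rw [gzpow, if_pos (by omega), show ((1:ℤ)).toNat = 1 from rfl, gpow, gpow, ← ha, gs.s_unit]

end GroupoidStruct



lemma section_open {X : Type*} [TopologicalSpace X] {r f : X → X}
    (hr : IsLocalHomeomorph r) {A : Set X} (hA : IsOpen A)
    (hf : ContinuousOn f A) (hsec : ∀ a ∈ A, r (f a) = a) : IsOpen (f '' A) := by
  rw [isOpen_iff_forall_mem_open]
  rintro _ ⟨a, ha, rfl⟩
  obtain ⟨e, he, heq⟩ := hr (f a)
  set W : Set X := A ∩ f ⁻¹' e.source with hW
  have hWopen : IsOpen W := hf.isOpen_inter_preimage hA e.open_source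
  have haW : a ∈ W := ⟨ha, by simpa [heq] using he⟩
  refine ⟨f '' W, ?_, ?_, ⟨a, haW, rfl⟩⟩
  · exact Set.image_mono Set.inter_subset_left
  · have himg : f '' W = e.source ∩ r ⁻¹' W := by
      ext v
      constructor
      · rintro ⟨w, hw, rfl⟩
        exact ⟨hw.2, by rw [Set.mem_preimage, hsec w hw.1]; exact hw⟩
      · rintro ⟨hv, hrv⟩
        refine ⟨r v, hrv, ?_⟩
        have h1 : f (r v) ∈ e.source := hrv.2
        have h2 : r (f (r v)) = r v := hsec _ hrv.1
        have := e.injOn (by exact h1) hv (by rw [← heq, h2, heq])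
        exact this
    rw [himg]
    exact e.open_source.inter (hr.continuous.isOpen_preimage _ hWopen)


lemma mul_contOn {G : Type*} [TopologicalSpace G] (gs : GroupoidStruct G)
    (hmul : Continuous fun p : { p : G × G // gs.s p.1 = gs.r p.2 } => gs.mul p.1.1 p.1.2)
    {A : Set G} {f g : G → G} (hf : ContinuousOn f A) (hg : ContinuousOn g A)
    (hc : ∀ x ∈ A, gs.s (f x) = gs.r (g x)) :
    ContinuousOn (fun x => gs.mul (f x) (g x)) A := by
  rw [continuousOn_iff_continuous_restrict] at *
  exact hmul.comp (Continuous.subtype_mk (hf.prodMk hg) fun x => hc x.1 x.2)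

lemma unitSpace_open {G : Type*} [TopologicalSpace G] (gs : GroupoidStruct G)
    (hr : IsLocalHomeomorph gs.r) : IsOpen gs.unitSpace := by
  rw [isOpen_iff_forall_mem_open]
  intro u hu
  have hu : gs.r u = u := hu
  obtain ⟨e, he, heq⟩ := hr u
  refine ⟨e.source ∩ gs.r ⁻¹' e.source, ?_, e.open_source.inter
    (hr.continuous.isOpen_preimage _ e.open_source), ⟨he, by rw [Set.mem_preimage, hu]; exact he⟩⟩
  rintro x ⟨hx, hrx⟩
  have := e.injOn (by exact hrx) hx (by rw [← heq, gs.r_r])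
  exact this

end Aux

/-- A locally compact Hausdorff étale groupoid `G` is effective (the interior of its
isotropy bundle equals the unit space) if and only if `G` contains no nontrivial open
abelian subgroupoid. -/
theorem stmt4 {G : Type*} [TopologicalSpace G] [LocallyCompactSpace G] [T2Space G]
    (gs : GroupoidStruct G)
    (hmul : Continuous fun p : { p : G × G // gs.s p.1 = gs.r p.2 } => gs.mul p.1.1 p.1.2)
    (hinv : Continuous gs.inv)
    (hr : IsLocalHomeomorph gs.r)
    (hs : IsLocalHomeomorph gs.s) :
    interior gs.iso = gs.unitSpace ↔
      ∀ S : Set G, IsOpen S → gs.IsAbelianSubgroupoid S → S ⊆ gs.unitSpace := by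
  constructor
  · intro heff S hSopen hSab
    intro x hx
    have : x ∈ interior gs.iso := interior_maximal hSab.2.1 hSopen hx
    rwa [heff] at this
  · intro h
    apply Set.Subset.antisymm
    · -- interior iso ⊆ unitSpace
      intro g hg
      obtain ⟨e, he, heq⟩ := hr g
      set U : Set G := e.source ∩ interior gs.iso with hU
      have hUopen : IsOpen U := e.open_source.inter isOpen_interior
      have hgU : g ∈ U := ⟨he, hg⟩
      have hUiso : ∀ x ∈ U, gs.s x = gs.r x := by
        intro x hx
        have h1 : x ∈ gs.iso := interior_subset hx.2
        exact Eq.symm h1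
      set A : Set G := gs.r '' U with hA
      have hAopen : IsOpen A := hr.isOpenMap U hUopen
      set τ : G → G := ⇑e.symm with hτ
      have hτU : ∀ u ∈ A, τ u ∈ U := by
        rintro _ ⟨x, hx, rfl⟩
        rw [heq] at *
        rwa [show τ (e x) = x from e.left_inv hx.1]
      have hτr : ∀ u ∈ A, gs.r (τ u) = u := by
        rintro _ ⟨x, hx, rfl⟩
        rw [heq] at *
        rw [show τ (e x) = x from e.left_inv hx.1]
      have hτiso : ∀ u ∈ A, gs.s (τ u) = gs.r (τ u) := fun u hu => hUiso _ (hτU u hu)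
      have hτcont : ContinuousOn τ A := e.continuousOn_symm.mono (by
        rintro _ ⟨x, hx, rfl⟩
        rw [heq]
        exact e.map_source hx.1)
      -- the subgroupoid
      set S : Set G := {x | ∃ u ∈ A, ∃ m : ℤ, x = gs.gzpow (τ u) m} with hS
      -- powers are continuous sections over A
      have hgpow_cont : ∀ n : ℕ, ContinuousOn (fun u => gs.gpow (τ u) n) A := by
        intro n
        induction n with
        | zero =>
          have : ∀ u ∈ A, gs.gpow (τ u) 0 = u := fun u hu => hτr u hu
          exact (continuousOn_id.congr fun u hu => (this u hu))
        | succ n ih =>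
          exact mul_contOn gs hmul hτcont ih fun u hu => by
            rw [gs.gpow_r (hτiso u hu) n, hτiso u hu]
      have hzpow_cont : ∀ m : ℤ, ContinuousOn (fun u => gs.gzpow (τ u) m) A := by
        intro m
        by_cases hm : 0 ≤ m
        · exact (hgpow_cont m.toNat).congr fun u hu => by
            simp [GroupoidStruct.gzpow, hm]
        · exact (hinv.comp_continuousOn (hgpow_cont (-m).toNat)).congr fun u hu => by
            simp [GroupoidStruct.gzpow, hm]
      have hzpow_r : ∀ u ∈ A, ∀ m : ℤ, gs.r (gs.gzpow (τ u) m) = u :=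
        fun u hu m => (gs.gzpow_r (hτiso u hu) m).trans (hτr u hu)
      have hzpow_s : ∀ u ∈ A, ∀ m : ℤ, gs.s (gs.gzpow (τ u) m) = u :=
        fun u hu m => (gs.gzpow_s (hτiso u hu) m).trans (hτr u hu)
      have hSopen : IsOpen S := by
        rw [isOpen_iff_forall_mem_open]
        rintro x ⟨u, hu, m, rfl⟩
        refine ⟨(fun u => gs.gzpow (τ u) m) '' A, ?_, ?_, ⟨u, hu, rfl⟩⟩
        · rintro _ ⟨v, hv, rfl⟩
          exact ⟨v, hv, m, rfl⟩
        · exact section_open hr hAopen (hzpow_cont m) fun v hv => hzpow_r v hv m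
      have hSab : gs.IsAbelianSubgroupoid S := by
        refine ⟨⟨?_, ?_⟩, ?_, ?_⟩
        · rintro _ ⟨u, hu, m, rfl⟩
          exact ⟨u, hu, -m, (gs.gzpow_inv (hτiso u hu) m)⟩
        · rintro _ ⟨u, hu, m, rfl⟩ _ ⟨v, hv, k, rfl⟩ hcomp
          have huv : u = v := by
            rw [hzpow_s u hu m, hzpow_r v hv k] at hcomp
            exact hcomp
          subst huv
          exact ⟨u, hu, m + k, (gs.gzpow_mul (hτiso u hu) m k)⟩
        · rintro _ ⟨u, hu, m, rfl⟩
          show gs.r _ = gs.s _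
          rw [hzpow_r u hu m, hzpow_s u hu m]
        · rintro _ ⟨u, hu, m, rfl⟩ _ ⟨v, hv, k, rfl⟩ hcomp
          have huv : u = v := by
            rw [hzpow_s u hu m, hzpow_r v hv k] at hcomp
            exact hcomp
          subst huv
          rw [gs.gzpow_mul (hτiso u hu) m k, gs.gzpow_mul (hτiso u hu) k m, add_comm]
      -- g belongs to S
      have hgS : g ∈ S := by
        refine ⟨gs.r g, ⟨g, hgU, rfl⟩, 1, ?_⟩
        have : τ (gs.r g) = g := by
          rw [heq]
          exact e.left_inv he
        rw [this, gs.gzpow_one (hUiso g hgU)]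
      exact h S hSopen hSab hgS
    · -- unitSpace ⊆ interior iso
      apply interior_maximal
      · intro u hu
        have hu : gs.r u = u := hu
        show gs.r u = gs.s u
        have := gs.s_r u
        rw [hu] at this
        rw [hu, this]
      · exact unitSpace_open gs hr
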